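/- Let p be a prime, R the ring of integers of a finite ramified extension of ℚ_p, with prime element t and ramification index d > 1, so p = t^d θ with θ a unit in R. Let G = ⟨a | a^p = 1⟩ and for 1 ≤ j < d, 1 ≤ i < p set X_{ji} = t^j·RG + (a-1)^i·RG ⊆ RG. Then X_{ji} is an indecomposable RG-module. -/

import Mathlib

open MonoidAlgebra LinearMap

lemma key {R K : Type*} [CommRing R] [IsDomain R] [Field K]
    (c : R →+* K) (hc : Function.Injective ⇑c)
    (p : ℕ) (hp : p.Prime) (t θ : R) (ht : Irreducible t)
    (d : ℕ) (hptd : (p : R) = t ^ d * θ) (j : ℕ) (hjd : j < d)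
    (G : Type*) [CommGroup G] [Fintype G] (hG : Fintype.card G = p)
    (u : MonoidAlgebra R G)
    (hu : u * u = algebraMap R (MonoidAlgebra R G) (t ^ j) * u) :
    u = 0 ∨ u = algebraMap R (MonoidAlgebra R G) (t ^ j) := by
  classical
  -- the coefficient-extension ring hom
  let φ : MonoidAlgebra R G →+* MonoidAlgebra K G :=
    liftNCRingHom (singleOneRingHom.comp c) (of K G) (fun _ _ => mul_comm _ _)
  have hφsingle : ∀ (g : G) (r : R), φ (single g r) = single g (c r) := by
    intro g r
    show liftNC _ _ (single g r) = _
    rw [liftNC_single]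
    show singleOneRingHom (c r) * (of K G g) = _
    rw [singleOneRingHom]
    simp [MonoidAlgebra.single_mul_single]
  have hφ : ∀ (f : MonoidAlgebra R G) (y : G), (φ f).coeff y = c (f.coeff y) := by
    intro f
    induction f using MonoidAlgebra.induction_linear with
    | zero => simp
    | add f g hf hg =>
        intro y
        rw [map_add]
        rw [coeff_add, coeff_add, Finsupp.add_apply, Finsupp.add_apply, hf, hg, map_add]
    | single g r =>
        intro y
        rw [hφsingle]
        rcases eq_or_ne g y with rfl | hgy
        · simp [coeff_single, Finsupp.single_apply]
        · simp [coeff_single, Finsupp.single_apply, hgy]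
  have hφinj : Function.Injective ⇑φ := by
    intro f f' h
    ext y
    exact hc (by rw [← hφ, ← hφ, h])
  -- pass to the monoid algebra over the field K
  let b : Module.Basis G K (MonoidAlgebra K G) := MonoidAlgebra.basis G K
  haveI : Module.Finite K (MonoidAlgebra K G) := Module.Finite.of_basis b
  set w : MonoidAlgebra K G := φ u with hwdef
  set s : K := c (t ^ j) with hsdef
  have hs : s ≠ 0 := fun h => (pow_ne_zero j ht.ne_zero) (hc (h.trans (map_zero c).symm))
  have halg : φ (algebraMap R (MonoidAlgebra R G) (t ^ j)) = single (1 : G) s := by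
    rw [show algebraMap R (MonoidAlgebra R G) (t ^ j) = single (1 : G) (t ^ j) from rfl]
    exact hφsingle 1 (t ^ j)
  have hsmul : single (1 : G) s * w = s • w := by
    rw [show single (1 : G) s = algebraMap K (MonoidAlgebra K G) s from rfl,
      ← Algebra.smul_def]
  have hw : w * w = s • w := by
    have h1 := congrArg φ hu
    rw [map_mul, map_mul, halg] at h1
    rw [hwdef, h1, hsmul]
  set V : MonoidAlgebra K G →ₗ[K] MonoidAlgebra K G := LinearMap.mulLeft K w with hVdef
  set P : MonoidAlgebra K G →ₗ[K] MonoidAlgebra K G := s⁻¹ • V with hPdef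
  have hPapp : ∀ x, P x = s⁻¹ • (w * x) := fun x => rfl
  have hPP : P ∘ₗ P = P := by
    apply LinearMap.ext
    intro x
    rw [LinearMap.comp_apply, hPapp, hPapp,
      mul_smul_comm, ← mul_assoc, hw, smul_mul_assoc, smul_smul, smul_smul]
    congr 1
    field_simp
  obtain ⟨m, hm⟩ := (LinearMap.isProj_iff_isIdempotentElem P).mpr hPP
  have htr : LinearMap.trace K (MonoidAlgebra K G) P = (Module.finrank K ↥m : K) := hm.trace
  have htrV : LinearMap.trace K (MonoidAlgebra K G) V = (p : K) * w.coeff 1 := by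
    rw [LinearMap.trace_eq_matrix_trace K b]
    have hdiag : ∀ g : G, (LinearMap.toMatrix b b) V g g = w.coeff 1 := by
      intro g
      rw [LinearMap.toMatrix_apply]
      change ((w * MonoidAlgebra.single g (1:K) : MonoidAlgebra K G).coeff g) = w.coeff 1
      rw [MonoidAlgebra.coeff_mul_single_apply]
      simp
    rw [Matrix.trace]
    simp only [Matrix.diag, hdiag]
    rw [Finset.sum_const, Finset.card_univ, hG, nsmul_eq_mul]
  set r : ℕ := Module.finrank K ↥m with hrdef
  have hPV : LinearMap.trace K (MonoidAlgebra K G) P = s⁻¹ * ((p : K) * w.coeff 1) := by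
    rw [hPdef, map_smul, htrV, smul_eq_mul]
  have heq : (t : R) ^ j * (r : R) = (p : R) * u.coeff 1 := by
    apply hc
    rw [map_mul, map_mul, map_natCast, map_natCast, ← hsdef, ← hφ u 1, ← hwdef]
    rw [htr] at hPV
    field_simp at hPV
    rw [← hPV]
    ring
  have hrank : r ≤ p := by
    have hB : Module.finrank K (MonoidAlgebra K G) = p := by
      rw [Module.finrank_eq_card_basis b, hG]
    exact hB ▸ Submodule.finrank_le m
  by_cases hr0 : r = 0
  · -- P = 0, so u = 0
    left
    have hm0 : m = ⊥ := by
      rw [← Submodule.finrank_eq_zero (S := m)]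
      exact hr0
    have hP1 : P 1 = 0 := by
      have := hm.map_mem 1
      rwa [hm0, Submodule.mem_bot] at this
    have hw0 : w = 0 := by
      have h0 : s⁻¹ • (w * 1) = 0 := hP1
      rw [mul_one, smul_eq_zero] at h0
      rcases h0 with h | h
      · exact absurd (inv_eq_zero.mp h) hs
      · exact h
    apply hφinj
    rw [map_zero, ← hwdef, hw0]
  by_cases hrp2 : r = p
  · -- P = 1, so u = t^j
    right
    have hmt : m = ⊤ := by
      apply Submodule.eq_top_of_finrank_eq
      rw [← hrdef, hrp2, Module.finrank_eq_card_basis b, hG]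
    have hP1 : P 1 = 1 := hm.map_id 1 (hmt ▸ Submodule.mem_top)
    have hw1 : w = single (1 : G) s := by
      have h1 : s⁻¹ • (w * 1) = 1 := hP1
      rw [mul_one] at h1
      have h2 : w = s • (1 : MonoidAlgebra K G) := by
        rw [← h1, smul_smul, mul_inv_cancel₀ hs, one_smul]
      rw [h2, Algebra.smul_def, mul_one]
      rfl
    apply hφinj
    rw [halg, ← hwdef, hw1]
  · -- 0 < r < p : contradiction
    exfalso
    have h1 : 0 < r := Nat.pos_of_ne_zero hr0
    have h2 : r < p := lt_of_le_of_ne hrank hrp2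
    obtain ⟨k, hk1, hdk⟩ : ∃ k, 1 ≤ k ∧ d = j + k := ⟨d - j, by omega, by omega⟩
    have hdj : t ^ j * (r : R) = t ^ j * (t ^ k * (θ * u.coeff 1)) := by
      rw [heq, hptd, hdk, pow_add]
      ring
    have hr : (r : R) = t ^ k * (θ * u.coeff 1) :=
      mul_left_cancel₀ (pow_ne_zero j ht.ne_zero) hdj
    have htr' : t ∣ (r : R) := by
      rw [hr, show k = (k - 1) + 1 by omega, pow_succ]
      exact ⟨t ^ (k - 1) * (θ * u.coeff 1), by ring⟩
    have htp : t ∣ (p : R) := by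
      rw [hptd, show d = (d - 1) + 1 by omega, pow_succ]
      exact ⟨t ^ (d - 1) * θ, by ring⟩
    have hcop : Nat.gcd p r = 1 :=
      Nat.Coprime.gcd_eq_one (hp.coprime_iff_not_dvd.mpr
        (fun hdvd => absurd (Nat.le_of_dvd h1 hdvd) (not_le.mpr h2)))
    have hbez := Nat.gcd_eq_gcd_ab p r
    rw [hcop] at hbez
    have hbezR : (1 : R) = (p : R) * ((Nat.gcdA p r : ℤ) : R)
        + (r : R) * ((Nat.gcdB p r : ℤ) : R) := by
      have := congrArg (fun z : ℤ => ((z : ℤ) : R)) hbez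
      push_cast at this ⊢
      exact this
    have : t ∣ (1 : R) := by
      rw [hbezR]
      exact dvd_add (htp.mul_right _) (htr'.mul_right _)
    exact ht.not_isUnit (isUnit_of_dvd_one this)


/-- Abstract indecomposability criterion for an ideal `X` containing a regular
element `τ` such that every `u` with `u² = τ·u` is `0` or `τ`. -/
lemma indec {A : Type*} [CommRing A] {X : Ideal A}
    (τA : A) (hτ : τA ∈ X) (hreg : ∀ z : A, τA * z = 0 → z = 0)
    (hkey : ∀ u : A, u * u = τA * u → u = 0 ∨ u = τA)
    (N₁ N₂ : Submodule A ↥X) (hcompl : IsCompl N₁ N₂) : N₁ = ⊥ ∨ N₂ = ⊥ := by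
  classical
  let τ : ↥X := ⟨τA, hτ⟩
  let pr : ↥X →ₗ[A] ↥N₁ := N₁.linearProjOfIsCompl N₂ hcompl
  let e : ↥X →ₗ[A] ↥X := (N₁.subtype).comp pr
  have he1 : ∀ x : ↥X, x ∈ N₁ → e x = x := by
    intro x hx
    show N₁.subtype (pr x) = x
    have h : pr x = ⟨x, hx⟩ := Submodule.linearProjOfIsCompl_apply_left hcompl (⟨x, hx⟩ : ↥N₁)
    rw [h]
    rfl
  have hemem : ∀ x : ↥X, e x ∈ N₁ := fun x => SetLike.coe_mem _
  have hcomm : ∀ x y : ↥X, (x : A) * ↑(e y) = (y : A) * ↑(e x) := by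
    intro x y
    have hxy : (x : A) • y = (y : A) • x := by
      apply Subtype.ext
      show (x : A) • (y : A) = (y : A) • (x : A)
      rw [smul_eq_mul, smul_eq_mul, mul_comm]
    calc (x : A) * ↑(e y) = ↑((x : A) • e y) := rfl
      _ = ↑(e ((x : A) • y)) := by rw [map_smul]
      _ = ↑(e ((y : A) • x)) := by rw [hxy]
      _ = ↑((y : A) • e x) := by rw [map_smul]
      _ = (y : A) * ↑(e x) := rfl
  have heτ : e (e τ) = e τ := he1 (e τ) (hemem τ)
  have hueq : ((e τ : ↥X) : A) * ↑(e τ) = τA * ↑(e τ) := by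
    have h := hcomm τ (e τ)
    rw [heτ] at h
    exact h.symm
  rcases hkey _ hueq with h0 | hτ'
  · left
    rw [Submodule.eq_bot_iff]
    intro x hx
    have h := hcomm τ x
    rw [he1 x hx] at h
    have h' : τA * (x : A) = (x : A) * ↑(e τ) := h
    have hx0 : τA * (x : A) = 0 := by rw [h', h0, mul_zero]
    exact Subtype.ext (hreg _ hx0)
  · right
    rw [Submodule.eq_bot_iff]
    intro x hx
    have he2 : e x = 0 := by
      show N₁.subtype (pr x) = 0
      have h : pr x = 0 := Submodule.linearProjOfIsCompl_apply_right hcompl (⟨x, hx⟩ : ↥N₂)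
      rw [h, map_zero]
    have h := hcomm τ x
    rw [he2, hτ'] at h
    have hx0 : τA * (x : A) = 0 := by
      rw [mul_comm, ← h]
      simp
    exact Subtype.ext (hreg _ hx0)


set_option synthInstance.maxHeartbeats 1000000 in
set_option maxHeartbeats 4000000 in
/-- Let `R` be the ring of integers of a finite ramified extension
of `ℚ_p` with prime element `t` and ramification index `d > 1` (`p = t^d·θ`,
`θ` a unit), and `G = ⟨a | a^p = 1⟩`. For `1 ≤ j < d` and `1 ≤ i < p` the
`RG`-module `X_{ji} = t^j·RG + (a-1)^i·RG` is indecomposable. -/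
theorem stmt_6 (p : ℕ) [Fact p.Prime]
    (T : Type*) [Field T] [Algebra ℚ_[p] T] [FiniteDimensional ℚ_[p] T]
    [Algebra ℤ_[p] T] [IsScalarTower ℤ_[p] ℚ_[p] T]
    (t θ : ↥(integralClosure ℤ_[p] T)) (ht : Irreducible t) (hθ : IsUnit θ)
    (d : ℕ) (hd : 1 < d) (hp : (p : ↥(integralClosure ℤ_[p] T)) = t ^ d * θ)
    (j i : ℕ) (hj1 : 1 ≤ j) (hjd : j < d) (hi1 : 1 ≤ i) (hip : i < p) :
    letI R := ↥(integralClosure ℤ_[p] T)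
    letI G := Multiplicative (ZMod p)
    letI a : MonoidAlgebra R G := MonoidAlgebra.of R G (Multiplicative.ofAdd 1)
    letI X : Ideal (MonoidAlgebra R G) :=
      Ideal.span {algebraMap R (MonoidAlgebra R G) (t ^ j), (a - 1) ^ i}
    ∀ N₁ N₂ : Submodule (MonoidAlgebra R G) ↥X, IsCompl N₁ N₂ → N₁ = ⊥ ∨ N₂ = ⊥ := by
  intro N₁ N₂ hcompl
  classical
  let c : ↥(integralClosure ℤ_[p] T) →+* T := ((integralClosure ℤ_[p] T).val : _ →ₐ[ℤ_[p]] T).toRingHom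
  have hc : Function.Injective ⇑c := Subtype.coe_injective
  haveI : IsDomain ↥(integralClosure ℤ_[p] T) := Function.Injective.isDomain c hc
  have hreg : ∀ z : MonoidAlgebra ↥(integralClosure ℤ_[p] T) (Multiplicative (ZMod p)),
      algebraMap ↥(integralClosure ℤ_[p] T) (MonoidAlgebra ↥(integralClosure ℤ_[p] T) (Multiplicative (ZMod p))) (t ^ j) * z = 0 → z = 0 := by
    intro z hz
    refine MonoidAlgebra.ext (Finsupp.ext ?_)
    intro y
    have h1 : (algebraMap ↥(integralClosure ℤ_[p] T) (MonoidAlgebra ↥(integralClosure ℤ_[p] T) (Multiplicative (ZMod p))) (t ^ j) * z).coeff y = 0 := by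
      rw [hz]; rfl
    rw [show algebraMap ↥(integralClosure ℤ_[p] T) (MonoidAlgebra ↥(integralClosure ℤ_[p] T) (Multiplicative (ZMod p))) (t ^ j)
        = MonoidAlgebra.single 1 (t ^ j) from rfl,
      MonoidAlgebra.single_one_mul_apply] at h1
    exact (mul_eq_zero.mp h1).resolve_left (pow_ne_zero j ht.ne_zero)
  have hcard : Fintype.card (Multiplicative (ZMod p)) = p := by
    rw [Fintype.card_multiplicative, ZMod.card]
  exact indec (algebraMap ↥(integralClosure ℤ_[p] T) (MonoidAlgebra ↥(integralClosure ℤ_[p] T) (Multiplicative (ZMod p))) (t ^ j))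
    (Ideal.subset_span (Set.mem_insert _ _)) hreg
    (fun u hu => key c hc p Fact.out t θ ht d hp j hjd (Multiplicative (ZMod p)) hcard u hu)
    N₁ N₂ hcompl
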